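/- arXiv:1401.3079 — 2 statements merged into one kernel-verified Lean document; each statement's English description precedes it below -/
import Mathlib

section
/- The Barnes-type Daehee polynomials of the first kind satisfy the expansion D_n(x|a_1,…,a_r) = ∑_{m=0}^n S_1(n,m) B_m(x|a_1,…,a_r), where S_1(n,m) are the signed Stirling numbers of the first kind and B_m(x|a_1,…,a_r) are Barnes' multiple Bernoulli polynomials. -/
open Finset PowerSeries

/-- Exponential generating function: `∑ f n * t^n / n!`. -/
noncomputable def egf (f : ℕ → ℚ) : PowerSeries ℚ :=
  PowerSeries.mk fun n => f n / n.factorial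

/-- The formal power series `log(1+t) = ∑_{m≥1} (-1)^{m-1} t^m / m`. -/
noncomputable def log1p : PowerSeries ℚ :=
  PowerSeries.mk fun n => if n = 0 then 0 else (-1) ^ (n - 1) / n

/-- Formal exponential composition: for `f` with zero constant term this is
`exp(f) = ∑_k f^k / k!` (the sum in each coefficient is finite). -/
noncomputable def expPS (f : PowerSeries ℚ) : PowerSeries ℚ :=
  PowerSeries.mk fun n =>
    ∑ k ∈ Finset.range (n + 1), (PowerSeries.coeff n (f ^ k)) / k.factorial

/-- `(1+t)^a := exp(a · log(1+t))` as a formal power series. -/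
noncomputable def onePow (a : ℚ) : PowerSeries ℚ := expPS (PowerSeries.C a * log1p)

/-- `e^{a t} = ∑ a^n t^n / n!`. -/
noncomputable def expAt (a : ℚ) : PowerSeries ℚ :=
  PowerSeries.mk fun n => a ^ n / n.factorial

/-- Falling factorial `(x)_n = x(x-1)⋯(x-n+1)`. -/
noncomputable def ffall (x : ℚ) (n : ℕ) : ℚ := ∏ i ∈ Finset.range n, (x - i)

lemma log1p_const : constantCoeff log1p = 0 := by
  rw [← coeff_zero_eq_constantCoeff_apply]; simp [log1p]

lemma coeff_log1p_pow_eq_zero {n k : ℕ} (h : n < k) : coeff n (log1p ^ k) = 0 := by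
  have hdvd : (X : PowerSeries ℚ)^k ∣ log1p ^ k :=
    pow_dvd_pow_of_dvd (X_dvd_iff.mpr log1p_const) k
  exact X_pow_dvd_iff.mp hdvd n h

lemma one_add_X_mul_dlog : (1 + X) * (d⁄dX ℚ log1p) = 1 := by
  ext n
  rcases n with _ | m
  · simp [add_mul, coeff_zero_eq_constantCoeff, map_mul, map_add, constantCoeff_X, coeff_derivative, ← coeff_zero_eq_constantCoeff_apply, log1p]
  · rw [add_mul, one_mul, map_add, coeff_succ_X_mul, coeff_derivative, coeff_derivative]
    simp only [log1p, coeff_mk, Nat.succ_ne_zero, if_false, Nat.add_sub_cancel]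
    have h1 : ((m:ℚ)+1) ≠ 0 := by positivity
    have h2 : ((m:ℚ)+1+1) ≠ 0 := by positivity
    push_cast
    field_simp
    ring_nf; simp [coeff_one]

lemma pow_rec (n k : ℕ) :
    ((n:ℚ)+1) * coeff (n+1) (log1p^(k+1)) + n * coeff n (log1p^(k+1))
      = ((k:ℚ)+1) * coeff n (log1p^k) := by
  have h : (1 + X) * (d⁄dX ℚ (log1p^(k+1))) = C ((k:ℚ)+1) * (log1p ^ k) := by
    rw [Derivation.leibniz_pow]
    simp only [Nat.add_sub_cancel, smul_eq_mul, nsmul_eq_mul]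
    push_cast
    calc (1 + X) * (((k:PowerSeries ℚ)+1) * (log1p ^ k * d⁄dX ℚ log1p))
        = ((k:PowerSeries ℚ)+1) * (log1p ^ k * ((1 + X) * d⁄dX ℚ log1p)) := by ring
      _ = ((k:PowerSeries ℚ)+1) * log1p ^ k := by rw [one_add_X_mul_dlog]; ring
      _ = C ((k:ℚ)+1) * log1p ^ k := by push_cast; simp [map_add, map_natCast]
  have h2 := congrArg (coeff n) h
  rcases n with _ | m
  · rw [add_mul, one_mul, map_add] at h2
    simp only [coeff_zero_eq_constantCoeff_apply, map_mul, constantCoeff_X, zero_mul] at h2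
    simp only [constantCoeff_C, ← coeff_zero_eq_constantCoeff_apply, coeff_derivative, coeff_zero_C] at h2
    push_cast at h2 ⊢
    linarith [h2]
  · rw [add_mul, one_mul, map_add, coeff_succ_X_mul, coeff_derivative, coeff_derivative, coeff_C_mul] at h2
    push_cast at h2 ⊢
    linarith [h2]

noncomputable def T (x : ℚ) (n : ℕ) : ℚ :=
  ∑ k ∈ range (n+1), x^k * coeff n (log1p^k) / k.factorial

lemma key (x : ℚ) (n : ℕ) : ((n:ℚ)+1) * T x (n+1) = (x - (n:ℚ)) * T x n := by
  have hzero : coeff (n+1) (log1p ^ 0) = 0 := by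
    simp [coeff_one]
  have hterm : ∀ j : ℕ, ((n:ℚ)+1) * (x^(j+1) * coeff (n+1) (log1p^(j+1)) / (j+1).factorial)
      = x * (x^j * coeff n (log1p^j) / j.factorial)
        - (n:ℚ) * (x^(j+1) * coeff n (log1p^(j+1)) / (j+1).factorial) := by
    intro j
    have hp := pow_rec n j
    have hf : (((j+1).factorial : ℚ)) = ((j:ℚ)+1) * (j.factorial : ℚ) := by
      rw [Nat.factorial_succ]; push_cast; ring
    have hj : ((j:ℚ)+1) ≠ 0 := by positivity
    have hjf : ((j.factorial : ℚ)) ≠ 0 := by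
      exact_mod_cast Nat.cast_ne_zero.mpr (Nat.factorial_ne_zero j)
    rw [hf]
    generalize coeff (n+1) (log1p^(j+1)) = A at hp ⊢
    generalize coeff n (log1p^j) = B at hp ⊢
    generalize coeff n (log1p^(j+1)) = E at hp ⊢
    have e2 : ((j:ℚ)+1) * B * (x^(j+1) / (((j:ℚ)+1)*(j.factorial:ℚ)))
        = x * (x^j * B / (j.factorial:ℚ)) := by
      field_simp; ring
    linear_combination (x^(j+1)/(((j:ℚ)+1)*(j.factorial:ℚ))) * hp + e2
  have h1 : ((n:ℚ)+1) * T x (n+1)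
      = ∑ j ∈ range (n+1), ((n:ℚ)+1) *
          (x^(j+1) * coeff (n+1) (log1p^(j+1)) / (j+1).factorial) := by
    rw [T, Finset.sum_range_succ', mul_add, Finset.mul_sum]
    simp [hzero]
  have hc0 : (n:ℚ) * coeff n (log1p ^ 0) = 0 := by
    rcases n with _ | m
    · simp
    · simp [coeff_one]
  have h2 : ∑ j ∈ range (n+1), x^(j+1) * coeff n (log1p^(j+1)) / (j+1).factorial
      = T x n - coeff n (log1p ^ 0) := by
    have hU : ∑ j ∈ range (n+2), x^j * coeff n (log1p^j) / j.factorial = T x n := by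
      rw [Finset.sum_range_succ, coeff_log1p_pow_eq_zero (Nat.lt_succ_self n)]
      simp [T]
    rw [Finset.sum_range_succ'] at hU
    simp only [pow_zero, Nat.factorial_zero, Nat.cast_one, one_mul, div_one] at hU
    rw [pow_zero]
    linarith [hU]
  rw [h1]
  calc ∑ j ∈ range (n+1), ((n:ℚ)+1) *
          (x^(j+1) * coeff (n+1) (log1p^(j+1)) / (j+1).factorial)
      = ∑ j ∈ range (n+1), (x * (x^j * coeff n (log1p^j) / j.factorial)
        - (n:ℚ) * (x^(j+1) * coeff n (log1p^(j+1)) / (j+1).factorial)) := by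
        exact Finset.sum_congr rfl fun j _ => hterm j
    _ = x * T x n - (n:ℚ) * (T x n - coeff n (log1p ^ 0)) := by
        rw [Finset.sum_sub_distrib, ← Finset.mul_sum, ← Finset.mul_sum, h2, T]
    _ = (x - (n:ℚ)) * T x n := by
        rw [mul_sub]; linarith [hc0]

lemma T_eq (x : ℚ) : ∀ n, T x n = ffall x n / n.factorial := by
  intro n
  induction n with
  | zero => simp [T, ffall]
  | succ m ih =>
    have hk := key x m
    have hm : ((m:ℚ)+1) ≠ 0 := by positivity
    have hmf : ((m.factorial : ℚ)) ≠ 0 := by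
      exact_mod_cast Nat.cast_ne_zero.mpr (Nat.factorial_ne_zero m)
    have hff : ffall x (m+1) = ffall x m * (x - m) := by
      rw [ffall, ffall, Finset.prod_range_succ]
    have hfac : (((m+1).factorial : ℚ)) = ((m:ℚ)+1) * (m.factorial : ℚ) := by
      rw [Nat.factorial_succ]; push_cast; ring
    rw [ih] at hk
    have : T x (m+1) = (x - (m:ℚ)) * (ffall x m / m.factorial) / ((m:ℚ)+1) := by
      field_simp at hk ⊢
      linarith [hk]
    rw [this, hff, hfac]
    field_simp

lemma coeff_onePow (x : ℚ) (n : ℕ) :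
    coeff n (onePow x) = ffall x n / n.factorial := by
  rw [← T_eq, onePow, expPS, coeff_mk, T]
  apply Finset.sum_congr rfl
  intro k _
  rw [mul_pow, ← map_pow, coeff_C_mul, mul_div_assoc]

lemma stirling (S1 : ℕ → ℕ → ℚ)
    (hS1 : ∀ (l : ℕ) (x : ℚ), ffall x l = ∑ j ∈ Finset.range (l + 1), S1 l j * x ^ j)
    (n k : ℕ) (hk : k ∈ Finset.range (n+1)) :
    coeff n (log1p ^ k) = S1 n k * k.factorial / n.factorial := by
  set P : Polynomial ℚ :=
    ∑ i ∈ range (n+1), Polynomial.C (coeff n (log1p^i) / i.factorial) * Polynomial.X^i with hP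
  set Q : Polynomial ℚ :=
    ∑ i ∈ range (n+1), Polynomial.C (S1 n i / n.factorial) * Polynomial.X^i with hQ
  have hPQ : P = Q := by
    apply Polynomial.funext
    intro x
    have h1 : P.eval x = T x n := by
      rw [hP, Polynomial.eval_finset_sum, T]
      apply Finset.sum_congr rfl
      intro i _
      simp only [Polynomial.eval_mul, Polynomial.eval_C, Polynomial.eval_pow, Polynomial.eval_X]
      ring
    have h2 : Q.eval x = ffall x n / n.factorial := by
      rw [hQ, Polynomial.eval_finset_sum, hS1 n x, Finset.sum_div]
      apply Finset.sum_congr rfl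
      intro i _
      simp only [Polynomial.eval_mul, Polynomial.eval_C, Polynomial.eval_pow, Polynomial.eval_X]
      ring
    rw [h1, h2, T_eq]
  have hco := congrArg (fun p => Polynomial.coeff p k) hPQ
  simp only [hP, hQ, Polynomial.finset_sum_coeff, Polynomial.coeff_C_mul,
    Polynomial.coeff_X_pow, mul_ite, mul_one, mul_zero,
    ] at hco
  rw [Finset.sum_ite_eq, Finset.sum_ite_eq, if_pos hk, if_pos hk] at hco
  have hkf : ((k.factorial : ℚ)) ≠ 0 := Nat.cast_ne_zero.mpr (Nat.factorial_ne_zero k)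
  have hnf : ((n.factorial : ℚ)) ≠ 0 := Nat.cast_ne_zero.mpr (Nat.factorial_ne_zero n)
  field_simp at hco ⊢
  linarith [hco]

noncomputable def phiFun (f : PowerSeries ℚ) : PowerSeries ℚ :=
  PowerSeries.mk fun n => ∑ k ∈ range (n+1), coeff k f * coeff n (log1p ^ k)

lemma phi_coeff_ext (f : PowerSeries ℚ) {n m : ℕ} (h : n ≤ m) :
    coeff n (phiFun f) = ∑ k ∈ range (m+1), coeff k f * coeff n (log1p ^ k) := by
  rw [phiFun, coeff_mk]
  apply Finset.sum_subset
  · exact Finset.range_subset_range.mpr (by omega)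
  · intro k hk hnk
    have : n < k := by
      simp only [Finset.mem_range] at hk hnk; omega
    rw [coeff_log1p_pow_eq_zero this, mul_zero]

lemma phi_mul (f g : PowerSeries ℚ) : phiFun (f * g) = phiFun f * phiFun g := by
  ext n
  set F : ℕ × ℕ → ℚ := fun p =>
    coeff p.1 f * coeff p.2 g * coeff n (log1p ^ (p.1 + p.2)) with hF
  have hF0 : ∀ p : ℕ × ℕ, n < p.1 + p.2 → F p = 0 := by
    intro p hp
    simp [hF, coeff_log1p_pow_eq_zero hp]
  have hL : coeff n (phiFun (f*g)) = ∑ k ∈ range (n+1), ∑ p ∈ Finset.HasAntidiagonal.antidiagonal k, F p := by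
    rw [phiFun, coeff_mk]
    apply Finset.sum_congr rfl
    intro k _
    rw [coeff_mul, Finset.sum_mul]
    apply Finset.sum_congr rfl
    intro p hp
    have hpk : p.1 + p.2 = k := Finset.HasAntidiagonal.mem_antidiagonal.mp hp
    simp only [hF, hpk]
  have hR : coeff n (phiFun f * phiFun g) = ∑ p ∈ range (n+1) ×ˢ range (n+1), F p := by
    rw [coeff_mul]
    have step1 : ∀ p : ℕ × ℕ, p ∈ Finset.HasAntidiagonal.antidiagonal n →
        coeff p.1 (phiFun f) * coeff p.2 (phiFun g)
          = ∑ q ∈ range (n+1) ×ˢ range (n+1),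
              (coeff q.1 f * coeff p.1 (log1p ^ q.1)) *
              (coeff q.2 g * coeff p.2 (log1p ^ q.2)) := by
      intro p hp
      have hpn : p.1 + p.2 = n := Finset.HasAntidiagonal.mem_antidiagonal.mp hp
      rw [phi_coeff_ext f (show p.1 ≤ n by omega), phi_coeff_ext g (show p.2 ≤ n by omega),
        Finset.sum_mul_sum, Finset.sum_product]
    rw [Finset.sum_congr rfl step1, Finset.sum_comm]
    apply Finset.sum_congr rfl
    intro q _
    have : ∑ p ∈ Finset.HasAntidiagonal.antidiagonal n,
        (coeff q.1 f * coeff p.1 (log1p ^ q.1)) * (coeff q.2 g * coeff p.2 (log1p ^ q.2))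
        = coeff q.1 f * coeff q.2 g *
            ∑ p ∈ Finset.HasAntidiagonal.antidiagonal n, coeff p.1 (log1p ^ q.1) * coeff p.2 (log1p ^ q.2) := by
      rw [Finset.mul_sum]
      apply Finset.sum_congr rfl
      intro p _
      ring
    rw [this, ← coeff_mul, ← pow_add]
  rw [hL, hR]
  have hdisj : Set.PairwiseDisjoint ↑(range (n+1)) (fun k => (Finset.HasAntidiagonal.antidiagonal k : Finset (ℕ × ℕ))) := by
    intro k₁ _ k₂ _ hne
    apply Finset.disjoint_left.mpr
    intro p hp1 hp2
    exact hne ((Finset.HasAntidiagonal.mem_antidiagonal.mp hp1).symm.trans (Finset.HasAntidiagonal.mem_antidiagonal.mp hp2))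
  rw [← Finset.sum_biUnion hdisj]
  apply Finset.sum_subset
  · intro p hp
    simp only [Finset.mem_biUnion, Finset.mem_range, Finset.HasAntidiagonal.mem_antidiagonal] at hp
    obtain ⟨k, hk, hpk⟩ := hp
    simp only [Finset.mem_product, Finset.mem_range]
    omega
  · intro p _ hp
    apply hF0
    simp only [Finset.mem_biUnion, Finset.mem_range, Finset.HasAntidiagonal.mem_antidiagonal] at hp
    by_contra hle
    exact hp ⟨p.1 + p.2, by omega, rfl⟩

lemma phi_one : phiFun 1 = 1 := by
  ext n
  rw [phiFun, coeff_mk]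
  rw [Finset.sum_eq_single 0]
  · simp
  · intro k _ hk
    simp [coeff_one, hk]
  · simp

lemma phi_add (f g : PowerSeries ℚ) : phiFun (f + g) = phiFun f + phiFun g := by
  ext n
  simp [phiFun, add_mul, Finset.sum_add_distrib]

noncomputable def phi : PowerSeries ℚ →+* PowerSeries ℚ where
  toFun := phiFun
  map_one' := phi_one
  map_mul' := phi_mul
  map_zero' := by ext n; simp [phiFun]
  map_add' := phi_add

lemma phi_X : phi X = log1p := by
  ext n
  show coeff n (phiFun X) = _
  rw [phiFun, coeff_mk]
  rcases n with _ | m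
  · simp [coeff_X, log1p]
  · rw [Finset.sum_eq_single 1]
    · simp
    · intro k _ hk
      simp [coeff_X, hk]
    · intro h
      exact absurd (Finset.mem_range.mpr (by omega)) h

lemma phi_expAt (y : ℚ) : phi (expAt y) = onePow y := by
  ext n
  show coeff n (phiFun (expAt y)) = _
  rw [phiFun, coeff_mk, onePow, expPS, coeff_mk]
  apply Finset.sum_congr rfl
  intro k _
  rw [mul_pow, ← map_pow, coeff_C_mul, expAt, coeff_mk]
  ring

lemma phi_egf (S1 : ℕ → ℕ → ℚ)
    (hS1 : ∀ (l : ℕ) (x : ℚ), ffall x l = ∑ j ∈ Finset.range (l + 1), S1 l j * x ^ j)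
    (b : ℕ → ℚ) :
    phi (egf b) = egf (fun n => ∑ m ∈ Finset.range (n+1), S1 n m * b m) := by
  ext n
  show coeff n (phiFun (egf b)) = _
  simp only [phiFun, egf, coeff_mk]
  rw [Finset.sum_div]
  apply Finset.sum_congr rfl
  intro k hk
  rw [stirling S1 hS1 n k hk]
  have hkf : ((k.factorial : ℚ)) ≠ 0 := Nat.cast_ne_zero.mpr (Nat.factorial_ne_zero k)
  have hnf : ((n.factorial : ℚ)) ≠ 0 := Nat.cast_ne_zero.mpr (Nat.factorial_ne_zero n)
  field_simp

theorem stmt1 (r : ℕ) (a : Fin r → ℚ) (ha : ∀ j, a j ≠ 0) (D : ℕ → ℚ → ℚ)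
    (hD : ∀ x : ℚ, (∏ j, (onePow (a j) - 1)) * egf (fun n => D n x) = log1p ^ r * onePow x)
    (B : ℕ → ℚ → ℚ) (hB : ∀ x : ℚ, (∏ j, (expAt (a j) - 1)) * egf (fun n => B n x) = (PowerSeries.X : PowerSeries ℚ) ^ r * expAt x)
    (S1 : ℕ → ℕ → ℚ) (hS1 : ∀ (l : ℕ) (x : ℚ), ffall x l = ∑ j ∈ Finset.range (l + 1), S1 l j * x ^ j)
    (n : ℕ) (x : ℚ) :
    D n x = ∑ m ∈ Finset.range (n + 1), S1 n m * B m x := by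
  have happ := congrArg phi (hB x)
  rw [map_mul, map_mul, map_pow, map_prod, phi_X, phi_expAt,
    phi_egf S1 hS1 (fun n => B n x)] at happ
  simp only [map_sub, map_one, phi_expAt] at happ
  rw [← hD x] at happ
  have h0 : (∏ j, (onePow (a j) - 1) : PowerSeries ℚ) ≠ 0 := by
    apply Finset.prod_ne_zero_iff.mpr
    intro j _
    intro hj
    have := congrArg (coeff 1) hj
    rw [map_sub, coeff_onePow] at this
    simp [ffall] at this
    exact ha j this
  have hegf := mul_left_cancel₀ h0 happ.symm
  have hc := congrArg (coeff n) hegf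
  rw [egf, egf, coeff_mk, coeff_mk] at hc
  have hnf : ((n.factorial : ℚ)) ≠ 0 := Nat.cast_ne_zero.mpr (Nat.factorial_ne_zero n)
  field_simp at hc
  exact hc
end

section
/- The Barnes-type Daehee polynomials of the second kind satisfy D̂_n(x|a_1,…,a_r) = ∑_{m=0}^n S_1(n,m) B_m(x+a_1+⋯+a_r|a_1,…,a_r), where S_1 are signed Stirling numbers of the first kind and B_m the Barnes multiple Bernoulli polynomials. -/
open Finset PowerSeries

noncomputable def Lr : PowerSeries ℚ := PowerSeries.mk fun n => (-1) ^ n / (n + 1)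

lemma log1p_eq : log1p = X * Lr := by
  ext n
  cases n with
  | zero => simp [log1p, Lr]
  | succ m => simp [log1p, Lr, PowerSeries.coeff_succ_X_mul]

lemma coeff_log1p_pow_of_lt {n k : ℕ} (h : n < k) :
    PowerSeries.coeff n (log1p ^ k) = 0 := by
  rw [log1p_eq, mul_pow, PowerSeries.coeff_X_pow_mul']
  simp [Nat.not_le.mpr h]

lemma coeff_log1p_zero : PowerSeries.coeff 0 log1p = 0 := by simp [log1p]

lemma coeff_log1p_one : PowerSeries.coeff 1 log1p = 1 := by simp [log1p]

noncomputable def PL : Polynomial ℚ →+* PowerSeries ℚ :=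
  Polynomial.eval₂RingHom (PowerSeries.C) log1p

lemma coeff_PL (P : Polynomial ℚ) (n : ℕ) :
    PowerSeries.coeff n (PL P) = ∑ m ∈ range (n + 1), P.coeff m * PowerSeries.coeff n (log1p ^ m) := by
  have hd : P.natDegree < max (P.natDegree + 1) (n + 1) := lt_of_lt_of_le (Nat.lt_succ_self _) (le_max_left _ _)
  rw [PL, Polynomial.coe_eval₂RingHom, Polynomial.eval₂_eq_sum_range' _ hd, map_sum]
  rw [← Finset.sum_subset (Finset.range_subset_range.mpr (le_max_right (P.natDegree + 1) (n + 1)))]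
  · apply Finset.sum_congr rfl
    intro m hm
    rw [PowerSeries.coeff_C_mul]
  · intro m _ hm
    rw [PowerSeries.coeff_C_mul, coeff_log1p_pow_of_lt (by simpa using hm), mul_zero]

noncomputable def compL (F : PowerSeries ℚ) : PowerSeries ℚ :=
  PowerSeries.mk fun n => ∑ m ∈ range (n + 1), PowerSeries.coeff m F * PowerSeries.coeff n (log1p ^ m)

lemma coeff_compL (F : PowerSeries ℚ) (n : ℕ) :
    PowerSeries.coeff n (compL F) = ∑ m ∈ range (n + 1), PowerSeries.coeff m F * PowerSeries.coeff n (log1p ^ m) := by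
  simp [compL]

lemma coeff_PL_trunc (F : PowerSeries ℚ) {p N : ℕ} (h : p < N) :
    PowerSeries.coeff p (PL (PowerSeries.trunc N F)) = PowerSeries.coeff p (compL F) := by
  rw [coeff_PL, coeff_compL]
  apply Finset.sum_congr rfl
  intro m hm
  rw [PowerSeries.coeff_trunc, if_pos (lt_of_le_of_lt (Nat.lt_succ_iff.mp (Finset.mem_range.mp hm)) h)]

lemma coeff_PL_trunc_poly (Q : Polynomial ℚ) (n : ℕ) :
    PowerSeries.coeff n (PL (PowerSeries.trunc (n + 1) (Q : PowerSeries ℚ))) = PowerSeries.coeff n (PL Q) := by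
  rw [coeff_PL, coeff_PL]
  apply Finset.sum_congr rfl
  intro m hm
  rw [PowerSeries.coeff_trunc, if_pos (Finset.mem_range.mp hm), Polynomial.coeff_coe]

lemma compL_mul (F G : PowerSeries ℚ) : compL (F * G) = compL F * compL G := by
  ext n
  rw [← coeff_PL_trunc (F * G) (Nat.lt_succ_self n),
      ← PowerSeries.trunc_trunc_mul_trunc, ← Polynomial.coe_mul, coeff_PL_trunc_poly, map_mul,
      PowerSeries.coeff_mul, PowerSeries.coeff_mul]
  apply Finset.sum_congr rfl
  intro p hp
  rw [Finset.HasAntidiagonal.mem_antidiagonal] at hp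
  rw [coeff_PL_trunc F (by omega), coeff_PL_trunc G (by omega)]

lemma compL_one : compL 1 = 1 := by
  ext n
  rw [coeff_compL]
  rw [Finset.sum_eq_single 0]
  · simp
  · intro m _ hm
    simp [PowerSeries.coeff_one, hm]
  · simp

lemma compL_add (F G : PowerSeries ℚ) : compL (F + G) = compL F + compL G := by
  ext n
  simp [coeff_compL, add_mul, Finset.sum_add_distrib]

noncomputable def compLHom : PowerSeries ℚ →+* PowerSeries ℚ where
  toFun := compL
  map_one' := compL_one
  map_mul' := compL_mul
  map_zero' := by ext n; simp [coeff_compL]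
  map_add' := compL_add

lemma compL_X : compL PowerSeries.X = log1p := by
  ext n
  rw [coeff_compL, Finset.sum_eq_single 1]
  · simp
  · intro m _ hm
    simp [PowerSeries.coeff_X, hm]
  · intro h
    simp only [Finset.mem_range, not_lt] at h
    have hn : n = 0 := by omega
    subst hn
    simp [coeff_log1p_zero]

lemma coeff_onePow_s2 (a : ℚ) (n : ℕ) :
    PowerSeries.coeff n (onePow a) = ∑ k ∈ range (n + 1), a ^ k / k.factorial * PowerSeries.coeff n (log1p ^ k) := by
  rw [onePow, expPS, PowerSeries.coeff_mk]
  apply Finset.sum_congr rfl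
  intro k _
  rw [mul_pow, ← map_pow, PowerSeries.coeff_C_mul]
  ring

lemma compL_expAt (a : ℚ) : compL (expAt a) = onePow a := by
  ext n
  rw [coeff_compL, coeff_onePow_s2]
  apply Finset.sum_congr rfl
  intro k _
  rw [expAt, PowerSeries.coeff_mk]

lemma expAt_add (a b : ℚ) : expAt (a + b) = expAt a * expAt b := by
  ext n
  rw [PowerSeries.coeff_mul, expAt, PowerSeries.coeff_mk, add_pow]
  rw [Finset.Nat.sum_antidiagonal_eq_sum_range_succ (fun p q => PowerSeries.coeff p (expAt a) * PowerSeries.coeff q (expAt b))]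
  rw [Finset.sum_div]
  apply Finset.sum_congr rfl
  intro k hk
  rw [Finset.mem_range, Nat.lt_succ_iff] at hk
  simp only [expAt, PowerSeries.coeff_mk]
  rw [Nat.cast_choose ℚ hk]
  have h1 : (Nat.factorial n : ℚ) ≠ 0 := Nat.cast_ne_zero.mpr (Nat.factorial_ne_zero n)
  have h2 : (Nat.factorial k : ℚ) ≠ 0 := Nat.cast_ne_zero.mpr (Nat.factorial_ne_zero k)
  have h3 : (Nat.factorial (n - k) : ℚ) ≠ 0 := Nat.cast_ne_zero.mpr (Nat.factorial_ne_zero (n - k))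
  field_simp

lemma onePow_add (a b : ℚ) : onePow (a + b) = onePow a * onePow b := by
  rw [← compL_expAt, ← compL_expAt, ← compL_expAt, expAt_add, compL_mul]

lemma expAt_zero : expAt 0 = 1 := by
  ext n
  rw [expAt, PowerSeries.coeff_mk, PowerSeries.coeff_one]
  cases n <;> simp

lemma onePow_zero : onePow 0 = 1 := by
  rw [← compL_expAt, expAt_zero, compL_one]

lemma dlog1p : PowerSeries.derivative ℚ log1p = PowerSeries.mk fun n => (-1) ^ n := by
  ext n
  rw [PowerSeries.coeff_derivative, PowerSeries.coeff_mk, log1p, PowerSeries.coeff_mk]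
  have : (n + 1 : ℚ) ≠ 0 := by positivity
  field_simp
  rw [if_neg (Nat.succ_ne_zero n), Nat.add_sub_cancel, Nat.cast_add_one, div_mul_cancel₀ _ this]

lemma one_add_X_mul_dlog1p : (1 + PowerSeries.X) * PowerSeries.derivative ℚ log1p = 1 := by
  rw [dlog1p]
  ext n
  rw [add_mul, one_mul, map_add, PowerSeries.coeff_mk]
  cases n with
  | zero => simp
  | succ m =>
    rw [PowerSeries.coeff_succ_X_mul, PowerSeries.coeff_mk, PowerSeries.coeff_one]
    simp [pow_succ]

lemma natCast_add_one_C (k : ℕ) : ((k : ℚ⟦X⟧) + 1) = PowerSeries.C ((k : ℚ) + 1) := by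
  rw [← map_natCast (PowerSeries.C) k, ← map_one (PowerSeries.C), ← map_add]

lemma one_add_X_mul_dpow (k : ℕ) :
    (1 + PowerSeries.X) * PowerSeries.derivative ℚ (log1p ^ (k + 1)) = ((k : ℚ⟦X⟧) + 1) * log1p ^ k := by
  rw [Derivation.leibniz_pow]
  simp only [smul_eq_mul, nsmul_eq_mul, Nat.add_sub_cancel]
  rw [show (1 + PowerSeries.X) * (((k + 1 : ℕ) : ℚ⟦X⟧) * (log1p ^ k * PowerSeries.derivative ℚ log1p))
      = ((k + 1 : ℕ) : ℚ⟦X⟧) * log1p ^ k * ((1 + PowerSeries.X) * PowerSeries.derivative ℚ log1p) by ring,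
    one_add_X_mul_dlog1p, mul_one]
  push_cast
  ring

lemma coeff_R (k n : ℕ) :
    (n + 1 : ℚ) * PowerSeries.coeff (n + 1) (log1p ^ (k + 1)) + n * PowerSeries.coeff n (log1p ^ (k + 1))
      = (k + 1) * PowerSeries.coeff n (log1p ^ k) := by
  have h := congrArg (PowerSeries.coeff n) (one_add_X_mul_dpow k)
  rw [add_mul, one_mul, map_add, PowerSeries.coeff_derivative, natCast_add_one_C,
    PowerSeries.coeff_C_mul] at h
  cases n with
  | zero =>
    have h0 : PowerSeries.coeff 0 (PowerSeries.X * PowerSeries.derivative ℚ (log1p ^ (k+1))) = 0 := by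
      simp [PowerSeries.coeff_zero_eq_constantCoeff]
    rw [h0] at h
    push_cast at h ⊢
    linarith
  | succ m =>
    rw [PowerSeries.coeff_succ_X_mul, PowerSeries.coeff_derivative] at h
    push_cast at h ⊢
    linarith

noncomputable def eSeq (n : ℕ) : ℚ := ∑ k ∈ range (n + 1), PowerSeries.coeff n (log1p ^ k) / k.factorial

lemma eSeq_rec (n : ℕ) : (n + 1 : ℚ) * eSeq (n + 1) = (1 - n) * eSeq n := by
  rw [eSeq, Finset.mul_sum, Finset.sum_range_succ']
  have h0 : (n + 1 : ℚ) * (PowerSeries.coeff (n+1) (log1p ^ 0) / Nat.factorial 0) = 0 := by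
    simp [PowerSeries.coeff_one]
  rw [h0, add_zero]
  have hstep : ∀ i ∈ range (n + 1),
      (n + 1 : ℚ) * (PowerSeries.coeff (n+1) (log1p ^ (i+1)) / Nat.factorial (i+1))
      = PowerSeries.coeff n (log1p ^ i) / Nat.factorial i
        - n * (PowerSeries.coeff n (log1p ^ (i+1)) / Nat.factorial (i+1)) := by
    intro i _
    have hfs : (Nat.factorial (i+1) : ℚ) = (i+1) * Nat.factorial i := by
      rw [Nat.factorial_succ]; push_cast; ring
    have gen : ∀ A B C fi : ℚ, fi ≠ 0 → ((n:ℚ)+1)*A + n*C = ((i:ℚ)+1)*B →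
        (n+1:ℚ)*(A/(((i:ℚ)+1)*fi)) = B/fi - n*(C/(((i:ℚ)+1)*fi)) := by
      intro A B C fi hfi hR
      have hi : ((i:ℚ)+1) ≠ 0 := by positivity
      rw [eq_sub_iff_add_eq, ← mul_div_assoc, ← mul_div_assoc, ← add_div, div_eq_div_iff (mul_ne_zero hi hfi) hfi]
      linear_combination fi * hR
    rw [hfs]
    exact gen _ _ _ _ (Nat.cast_ne_zero.mpr (Nat.factorial_ne_zero _)) (coeff_R i n)
  rw [Finset.sum_congr rfl hstep, Finset.sum_sub_distrib]
  have h1 : ∑ i ∈ range (n + 1), PowerSeries.coeff n (log1p ^ i) / Nat.factorial i = eSeq n := rfl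
  have h2 : ∑ i ∈ range (n + 1), n * (PowerSeries.coeff n (log1p ^ (i+1)) / Nat.factorial (i+1))
      = n * (eSeq n - PowerSeries.coeff n 1) := by
    rw [← Finset.mul_sum]
    congr 1
    have := Finset.sum_range_succ' (fun k => PowerSeries.coeff n (log1p ^ k) / Nat.factorial k) (n + 1)
    have htop : PowerSeries.coeff n (log1p ^ (n+1)) / Nat.factorial (n+1) = 0 := by
      rw [coeff_log1p_pow_of_lt (Nat.lt_succ_self n), zero_div]
    rw [Finset.sum_range_succ, htop, add_zero] at this
    have hf0 : PowerSeries.coeff n (log1p ^ 0) / (Nat.factorial 0 : ℚ) = PowerSeries.coeff n 1 := by simp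
    rw [eSeq]
    linarith
  rw [h1, h2]
  have h3 : (n : ℚ) * PowerSeries.coeff n 1 = 0 := by
    cases n with
    | zero => simp
    | succ m => rw [PowerSeries.coeff_one]; simp
  ring_nf
  ring_nf at h3
  linarith [h3]

lemma eSeq_zero : eSeq 0 = 1 := by simp [eSeq]

lemma eSeq_one : eSeq 1 = 1 := by
  have := eSeq_rec 0
  rw [eSeq_zero] at this
  push_cast at this
  linarith

lemma eSeq_big (n : ℕ) (h : 2 ≤ n) : eSeq n = 0 := by
  induction n with
  | zero => omega
  | succ m ih =>
    rcases Nat.lt_or_ge m 2 with hm | hm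
    · have hm2 : m = 1 := by omega
      subst hm2
      have := eSeq_rec 1
      rw [eSeq_one] at this
      push_cast at this
      linarith
    · have := eSeq_rec m
      rw [ih hm] at this
      have hm1 : (m + 1 : ℚ) ≠ 0 := by positivity
      rw [mul_zero] at this
      exact (mul_eq_zero.mp this).resolve_left hm1

lemma coeff_onePow_one (n : ℕ) : PowerSeries.coeff n (onePow 1) = eSeq n := by
  rw [coeff_onePow_s2, eSeq]
  apply Finset.sum_congr rfl
  intro k _
  rw [one_pow]
  ring

lemma onePow_one : onePow 1 = 1 + PowerSeries.X := by
  ext n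
  rw [coeff_onePow_one, map_add]
  match n with
  | 0 => simp [eSeq_zero]
  | 1 => simp [eSeq_one, PowerSeries.coeff_one]
  | (m+2) => rw [eSeq_big (m+2) (by omega)]; simp [PowerSeries.coeff_one, PowerSeries.coeff_X]

lemma onePow_natCast (N : ℕ) : onePow (N : ℚ) = (1 + PowerSeries.X) ^ N := by
  induction N with
  | zero => simpa using onePow_zero
  | succ m ih =>
    have : ((m + 1 : ℕ) : ℚ) = (m : ℚ) + 1 := by push_cast; ring
    rw [this, onePow_add, ih, onePow_one, pow_succ]

lemma coeff_one_add_X_pow (N n : ℕ) :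
    PowerSeries.coeff (R := ℚ) n ((1 + PowerSeries.X) ^ N) = N.choose n := by
  induction N generalizing n with
  | zero =>
    rw [pow_zero, PowerSeries.coeff_one]
    cases n <;> simp
  | succ m ih =>
    rw [pow_succ, mul_add, mul_one, map_add, ih]
    cases n with
    | zero =>
      have : PowerSeries.coeff (R := ℚ) 0 ((1 + PowerSeries.X) ^ m * PowerSeries.X) = 0 := by
        simp [PowerSeries.coeff_zero_eq_constantCoeff]
      rw [this]
      simp
    | succ p =>
      rw [mul_comm, PowerSeries.coeff_succ_X_mul, ih, Nat.choose_succ_succ']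
      push_cast
      ring

lemma ffall_nat (N n : ℕ) : ffall (N : ℚ) n = (N.descFactorial n : ℚ) := by
  rcases le_or_gt n N with h | h
  · rw [Nat.descFactorial_eq_prod_range, Nat.cast_prod, ffall]
    apply Finset.prod_congr rfl
    intro i hi
    have : i ≤ N := le_trans (le_of_lt (Finset.mem_range.mp hi)) h
    push_cast [Nat.cast_sub this]
    ring
  · rw [Nat.descFactorial_eq_zero_iff_lt.mpr h, ffall, Nat.cast_zero]
    apply Finset.prod_eq_zero (Finset.mem_range.mpr h)
    simp

lemma egf_ffall_nat (N : ℕ) : egf (ffall (N : ℚ)) = (1 + PowerSeries.X) ^ N := by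
  ext n
  rw [egf, PowerSeries.coeff_mk, coeff_one_add_X_pow, ffall_nat,
    Nat.descFactorial_eq_factorial_mul_choose]
  push_cast
  rw [mul_comm]
  field_simp [Nat.factorial_ne_zero]

lemma stirling_key (S1 : ℕ → ℕ → ℚ)
    (hS1 : ∀ (l : ℕ) (x : ℚ), ffall x l = ∑ j ∈ Finset.range (l + 1), S1 l j * x ^ j)
    (n k : ℕ) (hk : k ∈ range (n + 1)) :
    PowerSeries.coeff n (log1p ^ k) / k.factorial = S1 n k / n.factorial := by
  set p : Polynomial ℚ := ∑ j ∈ range (n + 1), Polynomial.C (PowerSeries.coeff n (log1p ^ j) / j.factorial) * Polynomial.X ^ j with hp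
  set q : Polynomial ℚ := ∑ j ∈ range (n + 1), Polynomial.C (S1 n j / n.factorial) * Polynomial.X ^ j with hq
  have heval : ∀ N : ℕ, p.eval (N : ℚ) = q.eval (N : ℚ) := by
    intro N
    have h1 : p.eval (N : ℚ) = PowerSeries.coeff n (onePow (N : ℚ)) := by
      rw [hp, Polynomial.eval_finset_sum, coeff_onePow_s2]
      apply Finset.sum_congr rfl
      intro j _
      simp only [Polynomial.eval_mul, Polynomial.eval_C, Polynomial.eval_pow, Polynomial.eval_X]
      ring
    have h2 : q.eval (N : ℚ) = PowerSeries.coeff n (egf (ffall (N : ℚ))) := by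
      rw [hq, Polynomial.eval_finset_sum, egf, PowerSeries.coeff_mk, hS1 n (N : ℚ), Finset.sum_div]
      apply Finset.sum_congr rfl
      intro j _
      simp only [Polynomial.eval_mul, Polynomial.eval_C, Polynomial.eval_pow, Polynomial.eval_X]
      ring
    rw [h1, h2, onePow_natCast, egf_ffall_nat]
  have hpq : p = q := by
    apply Polynomial.eq_of_infinite_eval_eq
    apply Set.Infinite.mono (s := Set.range ((↑) : ℕ → ℚ))
    · rintro _ ⟨N, rfl⟩
      exact heval N
    · exact Set.infinite_range_of_injective Nat.cast_injective
  have hc : ∀ (c : ℕ → ℚ), (∑ j ∈ range (n + 1), Polynomial.C (c j) * Polynomial.X ^ j).coeff k = c k := by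
    intro c
    rw [Polynomial.finset_sum_coeff]
    rw [Finset.sum_eq_single k]
    · simp
    · intro j _ hj
      rw [Polynomial.coeff_C_mul, Polynomial.coeff_X_pow, if_neg (Ne.symm hj), mul_zero]
    · intro h; exact absurd hk h
  have := congrArg (fun P => Polynomial.coeff P k) hpq
  simpa [hp, hq, hc] using this

lemma compLHom_apply (f : PowerSeries ℚ) : compLHom f = compL f := rfl

lemma coeff_one_onePow (b : ℚ) : PowerSeries.coeff 1 (onePow b) = b := by
  rw [coeff_onePow_s2]
  rw [show range 2 = {0, 1} by rfl, Finset.sum_insert (by simp), Finset.sum_singleton]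
  simp [coeff_log1p_one]

lemma onePow_sub_one_ne_zero {b : ℚ} (hb : b ≠ 0) : onePow b - 1 ≠ 0 := by
  intro h
  have := congrArg (PowerSeries.coeff 1) h
  rw [map_sub, coeff_one_onePow, PowerSeries.coeff_one] at this
  simp at this
  exact hb this

lemma onePow_sum {ι : Type*} (s : Finset ι) (f : ι → ℚ) :
    onePow (∑ j ∈ s, f j) = ∏ j ∈ s, onePow (f j) := by
  induction s using Finset.cons_induction with
  | empty => simpa using onePow_zero
  | cons i s hi ih => rw [Finset.sum_cons, Finset.prod_cons, onePow_add, ih]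

theorem stmt2' (r : ℕ) (a : Fin r → ℚ) (ha : ∀ j, a j ≠ 0) (Dh : ℕ → ℚ → ℚ)
    (hDh : ∀ x : ℚ, (∏ j, (onePow (a j) - 1)) * egf (fun n => Dh n x) = (∏ j, onePow (a j)) * log1p ^ r * onePow x)
    (B : ℕ → ℚ → ℚ) (hB : ∀ x : ℚ, (∏ j, (expAt (a j) - 1)) * egf (fun n => B n x) = (PowerSeries.X : PowerSeries ℚ) ^ r * expAt x)
    (S1 : ℕ → ℕ → ℚ) (hS1 : ∀ (l : ℕ) (x : ℚ), ffall x l = ∑ j ∈ Finset.range (l + 1), S1 l j * x ^ j)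
    (n : ℕ) (x : ℚ) :
    Dh n x = ∑ m ∈ Finset.range (n + 1), S1 n m * B m (x + ∑ j, a j) := by
  set y : ℚ := x + ∑ j, a j with hy
  have hb := congrArg compLHom (hB y)
  simp only [map_mul, map_prod, map_sub, map_one, map_pow, compLHom_apply, compL_expAt, compL_X] at hb
  have h2 : onePow y = onePow x * ∏ j, onePow (a j) := by
    rw [hy, onePow_add, onePow_sum]
  have key : (∏ j, (onePow (a j) - 1)) * egf (fun n => Dh n x)
      = (∏ j, (onePow (a j) - 1)) * compL (egf (fun n => B n y)) := by
    rw [hDh x, hb, h2]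
    ring
  have hprod_ne : (∏ j, (onePow (a j) - 1)) ≠ 0 :=
    Finset.prod_ne_zero_iff.mpr fun j _ => onePow_sub_one_ne_zero (ha j)
  have hegf : egf (fun n => Dh n x) = compL (egf fun n => B n y) :=
    mul_left_cancel₀ hprod_ne key
  have hco := congrArg (PowerSeries.coeff n) hegf
  rw [coeff_compL] at hco
  simp only [egf, PowerSeries.coeff_mk] at hco
  have hterm : ∀ m ∈ range (n + 1),
      B m y / (m.factorial : ℚ) * PowerSeries.coeff n (log1p ^ m) = S1 n m * B m y / n.factorial := by
    intro m hm
    have hst := stirling_key S1 hS1 n m hm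
    rw [show B m y / (m.factorial : ℚ) * PowerSeries.coeff n (log1p ^ m)
        = B m y * (PowerSeries.coeff n (log1p ^ m) / m.factorial) by ring, hst]
    ring
  rw [Finset.sum_congr rfl hterm, ← Finset.sum_div] at hco
  have hfac : ((n.factorial : ℚ)) ≠ 0 := Nat.cast_ne_zero.mpr (Nat.factorial_ne_zero n)
  field_simp at hco
  exact hco

theorem stmt2 (r : ℕ) (a : Fin r → ℚ) (ha : ∀ j, a j ≠ 0) (Dh : ℕ → ℚ → ℚ)
    (hDh : ∀ x : ℚ, (∏ j, (onePow (a j) - 1)) * egf (fun n => Dh n x) = (∏ j, onePow (a j)) * log1p ^ r * onePow x)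
    (B : ℕ → ℚ → ℚ) (hB : ∀ x : ℚ, (∏ j, (expAt (a j) - 1)) * egf (fun n => B n x) = (PowerSeries.X : PowerSeries ℚ) ^ r * expAt x)
    (S1 : ℕ → ℕ → ℚ) (hS1 : ∀ (l : ℕ) (x : ℚ), ffall x l = ∑ j ∈ Finset.range (l + 1), S1 l j * x ^ j)
    (n : ℕ) (x : ℚ) :
    Dh n x = ∑ m ∈ Finset.range (n + 1), S1 n m * B m (x + ∑ j, a j) := by
  exact stmt2' r a ha Dh hDh B hB S1 hS1 n x
end
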